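/- Let V be a finite-dimensional complex inner product space, let H₁ and H₂ be self-adjoint linear operators on V, and let L ⊆ V be a nonzero subspace. Assume: (i) H₂ v = 0 for every v ∈ L; (ii) there is a real δ with ⟪v, H₂ v⟫ ≥ δ·‖v‖² for every v in the orthogonal complement L⊥; (iii) δ ≥ 2·‖H₁‖; and (iv) L is invariant under H₁. Then the smallest eigenvalue of H₁ + H₂ is at least the minimum of ⟪v, H₁ v⟫ over unit vectors v ∈ L, i.e. λ(H₁ + H₂) ≥ λ(H₁|_L). -/

import Mathlib

/-- The infimum of the Rayleigh quotient `re ⟪v, A v⟫` of the operator `A` over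
unit vectors `v` in the set `S`.  For a self-adjoint operator on a nonzero
finite-dimensional complex inner ℂ product space and `S = Set.univ`, this is the
smallest eigenvalue `λ(A)`; for a subspace `S = L`, this is `λ(A|_L)`. -/
noncomputable def rayleighInf {V : Type*} [NormedAddCommGroup V] [InnerProductSpace ℂ V]
    (A : V →L[ℂ] V) (S : Set V) : ℝ :=
  sInf ((fun v => (inner ℂ v (A v) : ℂ).re) '' {v | v ∈ S ∧ ‖v‖ = 1})


set_option maxHeartbeats 1000000 in
set_option synthInstance.maxHeartbeats 200000 in
lemma abs_re_inner_le' {V : Type*} [NormedAddCommGroup V] [InnerProductSpace ℂ V]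
    (A : V →L[ℂ] V) (w : V) : |(inner ℂ w (A w) : ℂ).re| ≤ ‖A‖ * ‖w‖ ^ 2 := by
  have h1 : ‖(inner ℂ w (A w) : ℂ)‖ ≤ ‖A‖ * ‖w‖ ^ 2 := by
    calc ‖(inner ℂ w (A w) : ℂ)‖ ≤ ‖w‖ * ‖A w‖ := norm_inner_le_norm _ _
      _ ≤ ‖w‖ * (‖A‖ * ‖w‖) := by gcongr; exact A.le_opNorm w
      _ = ‖A‖ * ‖w‖ ^ 2 := by ring
  exact (Complex.abs_re_le_norm _).trans h1

lemma selfadj_inner_swap' {V : Type*} [NormedAddCommGroup V] [InnerProductSpace ℂ V]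
    [FiniteDimensional ℂ V] {A : V →L[ℂ] V} (hA : IsSelfAdjoint A) (x y : V) :
    (inner ℂ x (A y) : ℂ) = inner ℂ (A x) y := by
  rw [← ContinuousLinearMap.adjoint_inner_left, hA.adjoint_eq]

set_option maxHeartbeats 1000000 in
set_option synthInstance.maxHeartbeats 200000 in
private theorem projection_lemma_lower_bound_aux
    {V : Type*} [NormedAddCommGroup V] [InnerProductSpace ℂ V] [FiniteDimensional ℂ V]
    (H₁ H₂ : V →L[ℂ] V) (hH₁ : IsSelfAdjoint H₁) (hH₂ : IsSelfAdjoint H₂)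
    (L : Submodule ℂ V) (hL : L ≠ ⊥)
    (hker : ∀ v ∈ L, H₂ v = 0)
    (δ : ℝ)
    (hgap : ∀ v ∈ Lᗮ, δ * ‖v‖ ^ 2 ≤ (inner ℂ v (H₂ v) : ℂ).re)
    (hδ : 2 * ‖H₁‖ ≤ δ)
    (hinv : ∀ v ∈ L, H₁ v ∈ L) :
    sInf ((fun v => (inner ℂ v (H₁ v) : ℂ).re) '' {v | v ∈ (L : Set V) ∧ ‖v‖ = 1}) ≤
      sInf ((fun v => (inner ℂ v ((H₁ + H₂) v) : ℂ).re) '' {v | v ∈ Set.univ ∧ ‖v‖ = 1}) := by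
  classical
  obtain ⟨x, hxL, hx0⟩ := Submodule.exists_mem_ne_zero_of_ne_bot hL
  have hxnorm : ‖x‖ ≠ 0 := norm_ne_zero_iff.mpr hx0
  set u : V := (‖x‖⁻¹ : ℂ) • x with hu
  have hunorm : ‖u‖ = 1 := by
    rw [hu, norm_smul, norm_inv, Complex.norm_real, Real.norm_eq_abs,
      abs_of_nonneg (norm_nonneg x), inv_mul_cancel₀ hxnorm]
  have huL : u ∈ L := L.smul_mem _ hxL
  set S₁ := ((fun v => (inner ℂ v (H₁ v) : ℂ).re) '' {v | v ∈ (L : Set V) ∧ ‖v‖ = 1}) with hS₁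
  have hbdd : BddBelow S₁ := by
    refine ⟨-‖H₁‖, ?_⟩
    rintro r ⟨v, ⟨hv, hv1⟩, rfl⟩
    have h := (abs_le.mp (abs_re_inner_le' H₁ v)).1
    rw [hv1] at h
    nlinarith
  set μ := sInf S₁ with hμ
  have hμu : μ ≤ (inner ℂ u (H₁ u) : ℂ).re := csInf_le hbdd ⟨u, ⟨huL, hunorm⟩, rfl⟩
  have hμH : μ ≤ ‖H₁‖ := by
    have h := (abs_le.mp (abs_re_inner_le' H₁ u)).2
    rw [hunorm] at h
    nlinarith
  have hkey : ∀ a ∈ L, μ * ‖a‖ ^ 2 ≤ (inner ℂ a (H₁ a) : ℂ).re := by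
    intro a haL
    by_cases ha : a = 0
    · simp [ha]
    · have hna : ‖a‖ ≠ 0 := norm_ne_zero_iff.mpr ha
      set w : V := (‖a‖⁻¹ : ℂ) • a with hw
      have hwn : ‖w‖ = 1 := by
        rw [hw, norm_smul, norm_inv, Complex.norm_real, Real.norm_eq_abs,
          abs_of_nonneg (norm_nonneg a), inv_mul_cancel₀ hna]
      have hwL : w ∈ L := L.smul_mem _ haL
      have h1 : μ ≤ (inner ℂ w (H₁ w) : ℂ).re := csInf_le hbdd ⟨w, ⟨hwL, hwn⟩, rfl⟩
      have h2 : (inner ℂ w (H₁ w) : ℂ) = ((‖a‖⁻¹ ^ 2 : ℝ) : ℂ) * inner ℂ a (H₁ a) := by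
        rw [hw, map_smul, inner_smul_left, inner_smul_right, map_inv₀, Complex.conj_ofReal]
        push_cast
        ring
      have h3 : (inner ℂ w (H₁ w) : ℂ).re = ‖a‖⁻¹ ^ 2 * (inner ℂ a (H₁ a) : ℂ).re := by
        rw [h2, Complex.re_ofReal_mul]
      rw [h3] at h1
      have h4 := mul_le_mul_of_nonneg_right h1 (sq_nonneg ‖a‖)
      calc μ * ‖a‖ ^ 2 ≤ ‖a‖⁻¹ ^ 2 * (inner ℂ a (H₁ a) : ℂ).re * ‖a‖ ^ 2 := h4
        _ = (inner ℂ a (H₁ a) : ℂ).re := by field_simp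
  refine le_csInf ⟨_, ⟨u, ⟨Set.mem_univ u, hunorm⟩, rfl⟩⟩ ?_
  rintro r ⟨v, ⟨-, hv1⟩, rfl⟩
  set a : V := (L.orthogonalProjectionOnto v : V) with hadef
  set b : V := v - a with hbdef
  have haL : a ∈ L := (L.orthogonalProjectionOnto v).2
  have hbL : b ∈ Lᗮ := L.sub_starProjection_mem_orthogonal v
  have hvab : v = a + b := by rw [hbdef]; abel
  have hcross₁ : (inner ℂ b (H₁ a) : ℂ) = 0 :=
    Submodule.inner_left_of_mem_orthogonal (hinv a haL) hbL
  have hcross₁' : (inner ℂ a (H₁ b) : ℂ) = 0 := by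
    rw [selfadj_inner_swap' hH₁]
    exact Submodule.inner_right_of_mem_orthogonal (hinv a haL) hbL
  have hH₂a : H₂ a = 0 := hker a haL
  have hcross₂ : (inner ℂ b (H₂ a) : ℂ) = 0 := by rw [hH₂a, inner_zero_right]
  have hcross₂' : (inner ℂ a (H₂ b) : ℂ) = 0 := by
    rw [selfadj_inner_swap' hH₂, hH₂a, inner_zero_left]
  have haa₂ : (inner ℂ a (H₂ a) : ℂ) = 0 := by rw [hH₂a, inner_zero_right]
  have hab : (inner ℂ a b : ℂ) = 0 := Submodule.inner_right_of_mem_orthogonal haL hbL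
  have hnorm : ‖a‖ ^ 2 + ‖b‖ ^ 2 = 1 := by
    have h := @norm_add_sq ℂ V _ _ _ a b
    rw [hab] at h
    simp only [map_zero, mul_zero, add_zero] at h
    rw [← hvab, hv1] at h
    nlinarith
  have hexp : (inner ℂ v ((H₁ + H₂) v) : ℂ).re
      = (inner ℂ a (H₁ a) : ℂ).re + (inner ℂ b (H₁ b) : ℂ).re + (inner ℂ b (H₂ b) : ℂ).re := by
    rw [hvab]
    simp only [ContinuousLinearMap.add_apply, map_add, inner_add_left, inner_add_right]
    rw [hcross₁, hcross₁', hcross₂, hcross₂', haa₂]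
    simp only [Complex.add_re, Complex.zero_re]
    ring
  show μ ≤ (inner ℂ v ((H₁ + H₂) v) : ℂ).re
  rw [hexp]
  have h1 := hkey a haL
  have h2 := (abs_le.mp (abs_re_inner_le' H₁ b)).1
  have h3 := hgap b hbL
  have h4 : μ * ‖a‖ ^ 2 + μ * ‖b‖ ^ 2 = μ := by rw [← mul_add, hnorm, mul_one]
  have h5 : 0 ≤ (δ - 2 * ‖H₁‖) * ‖b‖ ^ 2 :=
    mul_nonneg (by linarith) (sq_nonneg _)
  have h6 : 0 ≤ (‖H₁‖ - μ) * ‖b‖ ^ 2 :=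
    mul_nonneg (by linarith) (sq_nonneg _)
  nlinarith [h4, h5, h6]

/-- Lower-bound half of the projection lemma (Appendix A of the paper):
`λ(H₁ + H₂) ≥ λ(H₁|_L)` when `H₂` annihilates `L`, penalizes `L⊥` by at least
`δ ≥ 2‖H₁‖`, and `L` is `H₁`-invariant. -/
theorem projection_lemma_lower_bound
    {V : Type*} [NormedAddCommGroup V] [InnerProductSpace ℂ V] [FiniteDimensional ℂ V]
    (H₁ H₂ : V →L[ℂ] V) (hH₁ : IsSelfAdjoint H₁) (hH₂ : IsSelfAdjoint H₂)
    (L : Submodule ℂ V) (hL : L ≠ ⊥)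
    (hker : ∀ v ∈ L, H₂ v = 0)
    (δ : ℝ)
    (hgap : ∀ v ∈ Lᗮ, δ * ‖v‖ ^ 2 ≤ (inner ℂ v (H₂ v) : ℂ).re)
    (hδ : 2 * ‖H₁‖ ≤ δ)
    (hinv : ∀ v ∈ L, H₁ v ∈ L) :
    rayleighInf H₁ (L : Set V) ≤ rayleighInf (H₁ + H₂) Set.univ :=
  projection_lemma_lower_bound_aux H₁ H₂ hH₁ hH₂ L hL hker δ hgap hδ hinv
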